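/- Let w ∈ W_{n,q} be a word, and let P be the insertion tableau produced by Hecke insertion of w. Then the length of the first row of P equals LIS(w), the length of the longest strictly increasing subsequence of w. -/

import Mathlib

/-- Replace row `i` of `T` by `r`, appending a new row if `i = T.length`. -/
def setRow (T : List (List ℕ)) (i : ℕ) (r : List ℕ) : List (List ℕ) :=
  if i < T.length then T.set i r else T ++ [r]

/-- One pass of Hecke insertion (BKSTY): insert value `x` starting at row `i`,
with `fuel` bounding the number of rows visited. -/
def heckeAux : ℕ → ℕ → List (List ℕ) → ℕ → List (List ℕ)
  | 0, _, T, _ => T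
  | fuel + 1, x, T, i =>
    let R := T.getD i []
    if R.all (· ≤ x) then
      -- terminating step: adjoin `x` at the end of row `i` if this yields an
      -- increasing tableau, otherwise leave the tableau unchanged
      if (x ∉ R) ∧ (i = 0 ∨ (R.length < (T.getD (i - 1) []).length ∧
            (T.getD (i - 1) []).getD R.length 0 < x)) then
        setRow T i (R ++ [x])
      else T
    else
      -- bumping step: `y` is the smallest entry of the row larger than `x`;
      -- replace it by `x` if this yields an increasing tableau; in any case
      -- insert `y` into the next row
      let p := (R.takeWhile (· ≤ x)).length
      let y := R.getD p 0
      let T' := if (p = 0 ∨ R.getD (p - 1) 0 < x) ∧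
            (i = 0 ∨ (T.getD (i - 1) []).getD p 0 < x) then setRow T i (R.set p x) else T
      heckeAux fuel y T' (i + 1)

/-- Hecke insertion of a value `x` into an increasing tableau `T`. -/
def heckeInsert (T : List (List ℕ)) (x : ℕ) : List (List ℕ) :=
  heckeAux (T.length + 1) x T 0

/-- The insertion tableau `P` of a word under the Hecke algorithm. -/
def heckeP (w : List ℕ) : List (List ℕ) := w.foldl heckeInsert []

/-- The shape `Heckeshape w` of the Hecke insertion tableau of `w`. -/
def heckeShape (w : List ℕ) : List ℕ := (heckeP w).map List.length

/-- Length of the longest strictly increasing subsequence of a word. -/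
noncomputable def LIS (w : List ℕ) : ℕ :=
  sSup {k | ∃ s : List ℕ, s.Sublist w ∧ s.Chain' (· < ·) ∧ s.length = k}

/-- Length of the longest strictly decreasing subsequence of a word. -/
noncomputable def LDS (w : List ℕ) : ℕ :=
  sSup {k | ∃ s : List ℕ, s.Sublist w ∧ s.Chain' (· > ·) ∧ s.length = k}

/-- patience-sorting step on the first row -/
def insert1 (R : List ℕ) (x : ℕ) : List ℕ :=
  if R.all (· ≤ x) then (if x ∈ R then R else R ++ [x])
  else
    if (R.takeWhile (· ≤ x)).length = 0 ∨ R.getD ((R.takeWhile (· ≤ x)).length - 1) 0 < x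
    then R.set (R.takeWhile (· ≤ x)).length x else R

def row (w : List ℕ) : List ℕ := w.foldl insert1 []

lemma setRow_getD_zero {T : List (List ℕ)} {i : ℕ} (r : List ℕ) (hi : 1 ≤ i) (hT : T ≠ []) :
    (setRow T i r).getD 0 [] = T.getD 0 [] := by
  obtain ⟨j, rfl⟩ := Nat.exists_eq_add_of_le hi
  obtain ⟨a, t, rfl⟩ := List.exists_cons_of_ne_nil hT
  unfold setRow
  split <;> simp [List.set]

lemma setRow_zero_getD_zero (T : List (List ℕ)) (r : List ℕ) :
    (setRow T 0 r).getD 0 [] = r := by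
  cases T <;> simp [setRow, List.set]

lemma heckeAux_getD_zero : ∀ (fuel x : ℕ) (T : List (List ℕ)) (i : ℕ), 1 ≤ i →
    (heckeAux fuel x T i).getD 0 [] = T.getD 0 [] := by
  intro fuel
  induction fuel with
  | zero => intro x T i _; rfl
  | succ f ih =>
    intro x T i hi
    simp only [heckeAux]
    split
    · split
      · next hcond =>
        have hT : T ≠ [] := by
          rcases hcond.2 with h0 | ⟨hlt, _⟩
          · omega
          · intro h; subst h; simp at hlt
        exact setRow_getD_zero _ hi hT
      · rfl
    · next hall =>
      rw [ih _ _ _ (by omega)]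
      split
      · next =>
        have hT : T ≠ [] := by
          intro h; subst h; simp at hall
        exact setRow_getD_zero _ hi hT
      · rfl

lemma heckeInsert_getD_zero (T : List (List ℕ)) (x : ℕ) :
    (heckeInsert T x).getD 0 [] = insert1 (T.getD 0 []) x := by
  unfold heckeInsert
  simp only [heckeAux]
  rw [insert1]
  split
  · next hall =>
    by_cases hmem : x ∈ T.getD 0 []
    · rw [if_neg (fun h => h.1 hmem), if_pos hmem]
    · rw [if_pos ⟨hmem, by left; trivial⟩, setRow_zero_getD_zero, if_neg hmem]
  · next hall =>
    rw [heckeAux_getD_zero _ _ _ _ (by omega)]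
    by_cases hc : ((T.getD 0 []).takeWhile (· ≤ x)).length = 0 ∨
        (T.getD 0 []).getD (((T.getD 0 []).takeWhile (· ≤ x)).length - 1) 0 < x
    · rw [if_pos ⟨hc, by left; trivial⟩, setRow_zero_getD_zero, if_pos hc]
    · rw [if_neg (fun h => hc h.1), if_neg hc]

lemma heckeP_getD_zero (w : List ℕ) : (heckeP w).getD 0 [] = row w := by
  suffices h : ∀ (w : List ℕ) (T : List (List ℕ)),
      (w.foldl heckeInsert T).getD 0 [] = w.foldl insert1 (T.getD 0 []) from h w []
  intro w
  induction w with
  | nil => intro T; rfl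
  | cons a t ih =>
    intro T
    simp only [List.foldl_cons]
    rw [ih, heckeInsert_getD_zero]

open List in
lemma takeWhile_le {R : List ℕ} {x i : ℕ} (hi : i < (R.takeWhile (· ≤ x)).length) :
    R.getD i 0 ≤ x := by
  have hp := List.takeWhile_prefix (l := R) (· ≤ x)
  have hlen : i < R.length := lt_of_lt_of_le hi hp.length_le
  rw [List.getD_eq_getElem _ _ hlen, ← hp.getElem hi]
  have hm : (R.takeWhile (· ≤ x))[i] ∈ R.takeWhile (· ≤ x) := List.getElem_mem hi
  simpa using List.mem_takeWhile_imp hm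

lemma takeWhile_len_le {R : List ℕ} {x : ℕ} : (R.takeWhile (· ≤ x)).length ≤ R.length :=
  (List.takeWhile_prefix _).length_le

lemma takeWhile_fail : ∀ (R : List ℕ) (x : ℕ), (R.takeWhile (· ≤ x)).length < R.length →
    x < R.getD (R.takeWhile (· ≤ x)).length 0 := by
  intro R
  induction R with
  | nil => intro x h; simp at h
  | cons a t ih =>
    intro x h
    by_cases hax : a ≤ x
    · rw [List.takeWhile_cons_of_pos (by simpa using hax)] at h ⊢
      simpa using ih x (by simpa using h)
    · rw [List.takeWhile_cons_of_neg (by simpa using hax)]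
      simpa using Nat.lt_of_not_le hax

lemma sorted_getD_le {R : List ℕ} (h : List.Pairwise (· < ·) R) {i j : ℕ} (hij : i ≤ j)
    (hj : j < R.length) : R.getD i 0 ≤ R.getD j 0 := by
  rcases Nat.eq_or_lt_of_le hij with rfl | hlt
  · rfl
  · rw [List.getD_eq_getElem _ _ (lt_trans hlt hj), List.getD_eq_getElem _ _ hj]
    exact le_of_lt (List.pairwise_iff_get.mp h ⟨i, lt_trans hlt hj⟩ ⟨j, hj⟩ hlt)

lemma not_all_lt {R : List ℕ} {x : ℕ} (hall : ¬ (R.all (· ≤ x) = true)) :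
    (R.takeWhile (· ≤ x)).length < R.length := by
  rcases Nat.lt_or_ge (R.takeWhile (· ≤ x)).length R.length with h | h
  · exact h
  · exfalso
    have : R.takeWhile (· ≤ x) = R :=
      (List.takeWhile_prefix _).eq_of_length (le_antisymm takeWhile_len_le h)
    refine hall (List.all_eq_true.mpr fun a ha => ?_)
    simpa using List.mem_takeWhile_imp (p := (· ≤ x)) (this ▸ ha)

lemma all_le {R : List ℕ} {x : ℕ} (hall : R.all (· ≤ x) = true) {a : ℕ} (ha : a ∈ R) : a ≤ x := by
  simpa using List.all_eq_true.mp hall a ha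

/-- length monotonicity and pointwise decrease of `insert1`. -/
lemma insert1_le (R : List ℕ) (x : ℕ) :
    R.length ≤ (insert1 R x).length ∧ ∀ i, i < R.length → (insert1 R x).getD i 0 ≤ R.getD i 0 := by
  unfold insert1
  split
  · next hall =>
    split
    · exact ⟨le_refl _, fun i _ => le_refl _⟩
    · refine ⟨by simp, fun i hi => ?_⟩
      rw [List.getD_eq_getElem _ _ (by simp; omega), List.getD_eq_getElem _ _ hi,
        List.getElem_append_left hi]
  · next hall =>
    have hp : (R.takeWhile (· ≤ x)).length < R.length := not_all_lt hall
    split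
    · refine ⟨by simp, fun i hi => ?_⟩
      rw [List.getD_eq_getElem _ _ (by simpa using hi), List.getD_eq_getElem _ _ hi,
        List.getElem_set]
      split
      · next he =>
        have hf := takeWhile_fail R x hp
        rw [he, List.getD_eq_getElem _ _ hi] at hf
        exact hf.le
      · exact le_refl _
    · exact ⟨le_refl _, fun i _ => le_refl _⟩

/-- `insert1` preserves strict sortedness. -/
lemma insert1_sorted {R : List ℕ} (hs : List.Pairwise (· < ·) R) (x : ℕ) :
    List.Pairwise (· < ·) (insert1 R x) := by
  unfold insert1
  split
  · next hall =>
    split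
    · exact hs
    · next hmem =>
      rw [List.pairwise_append]
      refine ⟨hs, by simp, fun a ha b hb => ?_⟩
      rw [List.mem_singleton] at hb
      exact hb ▸ lt_of_le_of_ne (all_le hall ha) (fun h => hmem (h ▸ ha))
  · next hall =>
    have hp : (R.takeWhile (· ≤ x)).length < R.length := not_all_lt hall
    set p := (R.takeWhile (· ≤ x)).length with hpdef
    split
    · next hc =>
      rw [List.pairwise_iff_get]
      intro i j hij
      have hi' : (i : ℕ) < R.length := by have := i.isLt; simpa using this
      have hj' : (j : ℕ) < R.length := by have := j.isLt; simpa using this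
      simp only [List.get_eq_getElem, List.getElem_set]
      have hmono : ∀ {a b : ℕ} (ha : a < R.length) (hb : b < R.length), a < b → R[a] < R[b] :=
        fun ha hb hab => List.pairwise_iff_get.mp hs ⟨_, ha⟩ ⟨_, hb⟩ hab
      split
      · next hpi =>
        -- i = p, entry x, need x < R[j] with p < j
        rw [if_neg (by omega)]
        have : x < R.getD p 0 := takeWhile_fail R x hp
        rw [List.getD_eq_getElem _ _ hp] at this
        exact this.trans (hmono hp hj' (by omega))
      · next hpi =>
        split
        · next hpj =>
          -- j = p : R[i] < x with i < p
          rcases hc with h0 | hlt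
          · omega
          · have h1 : R.getD i 0 ≤ R.getD (p-1) 0 := sorted_getD_le hs (by omega) (by omega)
            rw [List.getD_eq_getElem _ _ hi'] at h1
            exact lt_of_le_of_lt h1 hlt
        · exact hmono hi' hj' hij
    · exact hs

/-- key lemma: if `j = 0` or `R[j-1] < x` then after inserting `x`,
the row has length `> j` and its `j`-th entry is `≤ x`. -/
lemma insert1_claim {R : List ℕ} (hs : List.Pairwise (· < ·) R) {x j : ℕ} (hj : j ≤ R.length)
    (hcond : j = 0 ∨ R.getD (j-1) 0 < x) :
    j < (insert1 R x).length ∧ (insert1 R x).getD j 0 ≤ x := by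
  unfold insert1
  split
  · next hall =>
    split
    · next hmem =>
      obtain ⟨m, hm, hmx⟩ := List.mem_iff_getElem.mp hmem
      have hjm : j ≤ m := by
        rcases hcond with rfl | hlt
        · omega
        · by_contra hc
          have : R.getD m 0 ≤ R.getD (j-1) 0 := sorted_getD_le hs (by omega) (by omega)
          rw [List.getD_eq_getElem _ _ hm, hmx] at this
          omega
      have hjR : j < R.length := lt_of_le_of_lt hjm hm
      refine ⟨hjR, ?_⟩
      have := sorted_getD_le hs hjm hm
      rw [List.getD_eq_getElem _ _ hm, hmx] at this
      exact this
    · refine ⟨by simp; omega, ?_⟩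
      rcases Nat.lt_or_ge j R.length with hlt | hge
      · rw [List.getD_eq_getElem _ _ (by simp; omega), List.getElem_append_left hlt,
          ← List.getD_eq_getElem _ 0 hlt]
        exact all_le hall (by rw [List.getD_eq_getElem _ _ hlt]; exact List.getElem_mem hlt)
      · have hjeq : j = R.length := le_antisymm hj hge
        rw [List.getD_eq_getElem _ _ (by simp; omega)]
        subst hjeq
        simp
  · next hall =>
    have hp : (R.takeWhile (· ≤ x)).length < R.length := not_all_lt hall
    set p := (R.takeWhile (· ≤ x)).length with hpdef
    have hjp : j ≤ p := by
      rcases hcond with rfl | hlt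
      · omega
      · by_contra hc
        have h1 : x < R.getD p 0 := takeWhile_fail R x hp
        have h2 : R.getD p 0 ≤ R.getD (j-1) 0 := sorted_getD_le hs (by omega) (by omega)
        omega
    split
    · next hc =>
      refine ⟨by simp; omega, ?_⟩
      rcases Nat.eq_or_lt_of_le hjp with rfl | hlt
      · rw [List.getD_eq_getElem _ _ (by simp; omega), List.getElem_set, if_pos rfl]
      · rw [List.getD_eq_getElem _ _ (by simp; omega), List.getElem_set, if_neg (by omega),
          ← List.getD_eq_getElem _ 0 (by omega)]
        exact takeWhile_le hlt
    · next hc =>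
      -- here p ≠ 0 and ¬ R[p-1] < x, but R[p-1] ≤ x, so R[p-1] = x
      push_neg at hc
      obtain ⟨hp0, hple⟩ := hc
      have hpx : R.getD (p-1) 0 ≤ x := takeWhile_le (by omega)
      have hpeq : R.getD (p-1) 0 = x := le_antisymm hpx hple
      have hjp' : j ≤ p - 1 := by
        rcases hcond with rfl | hlt
        · omega
        · by_contra hcc
          have : R.getD (p-1) 0 ≤ R.getD (j-1) 0 := sorted_getD_le hs (by omega) (by omega)
          omega
      refine ⟨by omega, ?_⟩
      calc R.getD j 0 ≤ R.getD (p-1) 0 := sorted_getD_le hs hjp' (by omega)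
        _ = x := hpeq

lemma sublist_ext {s w : List ℕ} (x : ℕ) (h : s.Sublist w) : s.Sublist (w ++ [x]) :=
  h.trans (List.sublist_append_left w [x])

lemma chain'_concat {s : List ℕ} {b x : ℕ} (hc : (s ++ [b]).Chain' (· < ·)) (hbx : b < x) :
    ((s ++ [b]) ++ [x]).Chain' (· < ·) := by
  unfold List.Chain'
  rw [List.isChain_append]
  refine ⟨hc, by simp, ?_⟩
  intro y hy z hz
  simp at hy hz
  omega

lemma insert1_witness {R : List ℕ} {w : List ℕ} (x : ℕ)
    (H : ∀ i, i < R.length → ∃ s : List ℕ, (s ++ [R.getD i 0]).Sublist w ∧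
      (s ++ [R.getD i 0]).Chain' (· < ·) ∧ s.length = i) :
    ∀ i, i < (insert1 R x).length →
      ∃ s : List ℕ, (s ++ [(insert1 R x).getD i 0]).Sublist (w ++ [x]) ∧
        (s ++ [(insert1 R x).getD i 0]).Chain' (· < ·) ∧ s.length = i := by
  unfold insert1
  split
  · next hall =>
    split
    · intro i hi
      obtain ⟨s, h1, h2, h3⟩ := H i hi
      exact ⟨s, sublist_ext x h1, h2, h3⟩
    · next hmem =>
      intro i hi
      rcases Nat.lt_or_ge i R.length with hlt | hge
      · obtain ⟨s, h1, h2, h3⟩ := H i hlt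
        rw [List.getD_eq_getElem _ _ (by simp; omega), List.getElem_append_left hlt,
          ← List.getD_eq_getElem _ 0 hlt]
        exact ⟨s, sublist_ext x h1, h2, h3⟩
      · have hieq : i = R.length := by
          rw [List.length_append, List.length_singleton] at hi; omega
        subst hieq
        have hx : (R ++ [x]).getD R.length 0 = x := by
          rw [List.getD_eq_getElem _ _ (show R.length < (R ++ [x]).length by simp)]
          exact List.getElem_concat_length rfl _
        rw [hx]
        rcases List.eq_nil_or_concat R with hR | ⟨R', b, hR⟩
        · subst hR
          exact ⟨[], by simpa using List.sublist_append_right w [x], by simp [List.Chain'], by simp⟩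
        · have hlen : R.length - 1 < R.length := by rw [hR]; simp
          obtain ⟨s, h1, h2, h3⟩ := H (R.length - 1) hlen
          have hbx : R.getD (R.length - 1) 0 < x := by
            have hmem' : R.getD (R.length - 1) 0 ∈ R := by
              rw [List.getD_eq_getElem _ _ hlen]; exact List.getElem_mem hlen
            exact lt_of_le_of_ne (all_le hall hmem') (fun h => hmem (h ▸ hmem'))
          refine ⟨s ++ [R.getD (R.length - 1) 0], ?_, chain'_concat h2 hbx, by simp [h3]; omega⟩
          exact h1.append (List.Sublist.refl [x])
  · next hall =>
    have hp : (R.takeWhile (· ≤ x)).length < R.length := not_all_lt hall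
    set p := (R.takeWhile (· ≤ x)).length with hpdef
    split
    · next hc =>
      intro i hi
      have hiR : i < R.length := by simpa using hi
      rcases eq_or_ne i p with hip | hne
      · rw [List.getD_eq_getElem _ _ hi, List.getElem_set, if_pos hip.symm]
        rcases Nat.eq_zero_or_pos i with hi0 | hpos
        · refine ⟨[], ?_, by simp [List.Chain'], by simp [hi0]⟩
          simpa using List.sublist_append_right w [x]
        · have hlt : R.getD (i-1) 0 < x := by
            rcases hc with h0 | h
            · omega
            · rw [hip]; exact h
          have hlen : i - 1 < R.length := by omega
          obtain ⟨s, h1, h2, h3⟩ := H (i - 1) hlen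
          refine ⟨s ++ [R.getD (i-1) 0], h1.append (List.Sublist.refl [x]),
            chain'_concat h2 hlt, by simp [h3]; omega⟩
      · obtain ⟨s, h1, h2, h3⟩ := H i hiR
        rw [List.getD_eq_getElem _ _ hi, List.getElem_set, if_neg (fun h => hne h.symm),
          ← List.getD_eq_getElem _ 0 hiR]
        exact ⟨s, sublist_ext x h1, h2, h3⟩
    · intro i hi
      obtain ⟨s, h1, h2, h3⟩ := H i hi
      exact ⟨s, sublist_ext x h1, h2, h3⟩

lemma concat_cases (l : List ℕ) : l = [] ∨ ∃ l' a, l = l' ++ [a] := by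
  rcases List.eq_nil_or_concat l with h | ⟨l', a, h⟩
  · exact Or.inl h
  · exact Or.inr ⟨l', a, by simpa [List.concat_eq_append] using h⟩

lemma row_concat (w : List ℕ) (x : ℕ) : row (w ++ [x]) = insert1 (row w) x := by
  simp [row, List.foldl_append]

lemma row_sorted (w : List ℕ) : List.Pairwise (· < ·) (row w) := by
  induction w using List.reverseRecOn with
  | nil => simp [row]
  | append_singleton w x ih => rw [row_concat]; exact insert1_sorted ih x

lemma row_witness (w : List ℕ) : ∀ i, i < (row w).length →
    ∃ s : List ℕ, (s ++ [(row w).getD i 0]).Sublist w ∧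
      (s ++ [(row w).getD i 0]).Chain' (· < ·) ∧ s.length = i := by
  induction w using List.reverseRecOn with
  | nil => intro i hi; simp [row] at hi
  | append_singleton w x ih =>
    rw [row_concat]
    exact insert1_witness x ih

lemma row_upper (w : List ℕ) : ∀ (s : List ℕ) (a : ℕ), (s ++ [a]).Sublist w →
    (s ++ [a]).Chain' (· < ·) → s.length < (row w).length ∧ (row w).getD s.length 0 ≤ a := by
  induction w using List.reverseRecOn with
  | nil =>
    intro s a hsub _
    rw [List.sublist_nil] at hsub
    simp at hsub
  | append_singleton w x ih =>
    intro s a hsub hch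
    rw [row_concat]
    rcases List.sublist_append_iff.mp hsub with ⟨l₁, l₂, heq, h₁, h₂⟩
    rcases List.sublist_singleton.mp h₂ with rfl | rfl
    · rw [List.append_nil] at heq
      subst heq
      obtain ⟨hl, hv⟩ := ih s a h₁ hch
      obtain ⟨hlen, hpt⟩ := insert1_le (row w) x
      exact ⟨lt_of_lt_of_le hl hlen, le_trans (hpt _ hl) hv⟩
    · obtain ⟨rfl, rfl⟩ : s = l₁ ∧ a = x := by
        have h := List.append_inj' heq rfl
        exact ⟨h.1, by simpa using h.2⟩
      have hcond : s.length = 0 ∨ (row w).getD (s.length - 1) 0 < a := by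
        rcases concat_cases s with rfl | ⟨s'', b, rfl⟩
        · exact Or.inl rfl
        · right
          unfold List.Chain' at hch
          rw [List.isChain_append] at hch
          obtain ⟨hc1, -, hlast⟩ := hch
          have hba : b < a := hlast b (by simp) a (by simp)
          obtain ⟨hl, hv⟩ := ih s'' b h₁ hc1
          have : (row w).getD ((s'' ++ [b]).length - 1) 0 = (row w).getD s''.length 0 := by
            simp
          rw [this]
          omega
      have hjle : s.length ≤ (row w).length := by
        rcases hcond with h0 | hlt
        · omega
        · rcases concat_cases s with rfl | ⟨s'', b, rfl⟩
          · simp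
          · obtain ⟨hl, -⟩ := ih s'' b h₁ (List.isChain_append.mp hch).1
            simp; omega
      exact insert1_claim (row_sorted w) hjle hcond

theorem firstRow_length_eq_LIS' (w : List ℕ) :
    ((heckeP w).getD 0 []).length = LIS w := by
  rw [heckeP_getD_zero]
  unfold LIS
  have hbdd : BddAbove {k | ∃ s : List ℕ, s.Sublist w ∧ s.Chain' (· < ·) ∧ s.length = k} :=
    ⟨w.length, fun k ⟨s, h1, _, h3⟩ => h3 ▸ h1.length_le⟩
  have hne : Set.Nonempty {k | ∃ s : List ℕ, s.Sublist w ∧ s.Chain' (· < ·) ∧ s.length = k} :=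
    ⟨0, ⟨[], by simp [List.Chain']⟩⟩
  apply le_antisymm
  · -- (row w).length is attained
    apply le_csSup hbdd
    rcases Nat.eq_zero_or_pos (row w).length with h0 | hpos
    · exact ⟨[], by simp [h0, List.Chain']⟩
    · obtain ⟨s, h1, h2, h3⟩ := row_witness w ((row w).length - 1) (by omega)
      exact ⟨s ++ [(row w).getD ((row w).length - 1) 0], h1, h2, by simp [h3]; omega⟩
  · apply csSup_le hne
    rintro k ⟨s, h1, h2, rfl⟩
    rcases concat_cases s with rfl | ⟨s', b, rfl⟩
    · simp
    · obtain ⟨hl, -⟩ := row_upper w s' b h1 h2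
      simp; omega


/-- The length of the first row of the Hecke insertion tableau of a word
`w ∈ W_{n,q}` equals `LIS w`. -/
theorem firstRow_length_eq_LIS (n q : ℕ) (w : List ℕ) (hlen : w.length = n)
    (hent : ∀ x ∈ w, 1 ≤ x ∧ x ≤ q) :
    ((heckeP w).getD 0 []).length = LIS w := by
  exact firstRow_length_eq_LIS' w
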